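/- For every unit vector ξ in ℝ⁷ there exists a linear isometry F : ℝ⁶ → ℝ⁷ (from EuclideanSpace ℝ (Fin 6)) whose image is the hyperplane ξ⊥, such that for all x, y, z ∈ ℝ⁶: φ₀(ξ, Fx, Fy) = (f^{16} − f^{25} − f^{34})(x,y) and φ₀(Fx, Fy, Fz) = (f^{123} + f^{145} + f^{246} − f^{356})(x,y,z), where f¹,…,f⁶ is the dual standard basis of ℝ⁶. (This is the pointwise content of Theorem 5: every unit vector ξ induces on ξ⊥ a standard SU(3)-structure, with symplectic form ω_ξ = ι_ξφ₀ and Re Ω_ξ = φ₀|_{ξ⊥} equivalent to the standard model; it expresses the transitivity of G₂ on the unit sphere S⁶ with stabilizer SU(3).) -/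

import Mathlib

open scoped RealInnerProductSpace

noncomputable section

/-- `V7` is ℝ⁷ with its Euclidean inner product. -/
abbrev V7 : Type := EuclideanSpace ℝ (Fin 7)

/-- Evaluation of the wedge product `eⁱ ∧ eʲ ∧ eᵏ` of dual basis 1-forms on three vectors. -/
def w3 (i j k : Fin 7) (u v w : V7) : ℝ :=
  Matrix.det !![u i, u j, u k; v i, v j, v k; w i, w j, w k]

/-- Evaluation of the wedge product `eⁱ ∧ eʲ ∧ eᵏ ∧ eˡ` on four vectors. -/
def w4 (i j k l : Fin 7) (u v w z : V7) : ℝ :=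
  Matrix.det !![u i, u j, u k, u l; v i, v j, v k, v l;
                w i, w j, w k, w l; z i, z j, z k, z l]

/-- The standard G₂ 3-form φ₀ = e¹²³+e¹⁴⁵+e¹⁶⁷+e²⁴⁶−e²⁵⁷−e³⁴⁷−e³⁵⁶ (0-indexed). -/
def phi0 (u v w : V7) : ℝ :=
  w3 0 1 2 u v w + w3 0 3 4 u v w + w3 0 5 6 u v w + w3 1 3 5 u v w
    - w3 1 4 6 u v w - w3 2 3 6 u v w - w3 2 4 5 u v w

/-- The 4-form ψ₀ = ∗φ₀ = e⁴⁵⁶⁷+e²³⁶⁷+e²³⁴⁵+e¹³⁵⁷−e¹³⁴⁶−e¹²⁵⁶−e¹²⁴⁷ (0-indexed). -/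
def psi0 (u v w z : V7) : ℝ :=
  w4 3 4 5 6 u v w z + w4 1 2 5 6 u v w z + w4 1 2 3 4 u v w z + w4 0 2 4 6 u v w z
    - w4 0 2 3 5 u v w z - w4 0 1 4 5 u v w z - w4 0 1 3 6 u v w z

/-- ℝ⁶ with its Euclidean inner product. -/
abbrev V6 : Type := EuclideanSpace ℝ (Fin 6)

/-- Evaluation of f ⁱ ∧ f ʲ on two vectors of ℝ⁶. -/
def f2 (i j : Fin 6) (x y : V6) : ℝ := x i * y j - x j * y i

/-- Evaluation of f ⁱ ∧ f ʲ ∧ f ᵏ on three vectors of ℝ⁶. -/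
def f3 (i j k : Fin 6) (x y z : V6) : ℝ :=
  Matrix.det !![x i, x j, x k; y i, y j, y k; z i, z j, z k]

/-- The standard symplectic model form f¹⁶ − f²⁵ − f³⁴ on ℝ⁶ (0-indexed). -/
def omega6 (x y : V6) : ℝ := f2 0 5 x y - f2 1 4 x y - f2 2 3 x y

/-- The standard model form f¹²³ + f¹⁴⁵ + f²⁴⁶ − f³⁵⁶ on ℝ⁶ (0-indexed). -/
def Omega6 (x y z : V6) : ℝ :=
  f3 0 1 2 x y z + f3 0 3 4 x y z + f3 1 3 5 x y z - f3 2 4 5 x y z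

namespace G2Aux

def cross (u v : V7) : V7 := WithLp.toLp 2
  ![(u 1*v 2 - u 2*v 1) + (u 3*v 4 - u 4*v 3) + (u 5*v 6 - u 6*v 5),
    -(u 0*v 2 - u 2*v 0) + (u 3*v 5 - u 5*v 3) - (u 4*v 6 - u 6*v 4),
    (u 0*v 1 - u 1*v 0) - (u 3*v 6 - u 6*v 3) - (u 4*v 5 - u 5*v 4),
    -(u 0*v 4 - u 4*v 0) - (u 1*v 5 - u 5*v 1) + (u 2*v 6 - u 6*v 2),
    (u 0*v 3 - u 3*v 0) + (u 1*v 6 - u 6*v 1) + (u 2*v 5 - u 5*v 2),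
    -(u 0*v 6 - u 6*v 0) + (u 1*v 3 - u 3*v 1) - (u 2*v 4 - u 4*v 2),
    (u 0*v 5 - u 5*v 0) - (u 1*v 4 - u 4*v 1) - (u 2*v 3 - u 3*v 2)]

lemma cross0 (u v : V7) : cross u v 0 = (u 1*v 2 - u 2*v 1) + (u 3*v 4 - u 4*v 3) + (u 5*v 6 - u 6*v 5) := rfl
lemma cross1 (u v : V7) : cross u v 1 = -(u 0*v 2 - u 2*v 0) + (u 3*v 5 - u 5*v 3) - (u 4*v 6 - u 6*v 4) := rfl
lemma cross2 (u v : V7) : cross u v 2 = (u 0*v 1 - u 1*v 0) - (u 3*v 6 - u 6*v 3) - (u 4*v 5 - u 5*v 4) := rfl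
lemma cross3 (u v : V7) : cross u v 3 = -(u 0*v 4 - u 4*v 0) - (u 1*v 5 - u 5*v 1) + (u 2*v 6 - u 6*v 2) := rfl
lemma cross4 (u v : V7) : cross u v 4 = (u 0*v 3 - u 3*v 0) + (u 1*v 6 - u 6*v 1) + (u 2*v 5 - u 5*v 2) := rfl
lemma cross5 (u v : V7) : cross u v 5 = -(u 0*v 6 - u 6*v 0) + (u 1*v 3 - u 3*v 1) - (u 2*v 4 - u 4*v 2) := rfl
lemma cross6 (u v : V7) : cross u v 6 = (u 0*v 5 - u 5*v 0) - (u 1*v 4 - u 4*v 1) - (u 2*v 3 - u 3*v 2) := rfl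

lemma fin7cases {P : Fin 7 → Prop} (h0 : P 0) (h1 : P 1) (h2 : P 2) (h3 : P 3)
    (h4 : P 4) (h5 : P 5) (h6 : P 6) : ∀ i, P i := by
  intro i; fin_cases i <;> assumption

lemma inner7 (u v : V7) : ⟪u, v⟫ =
    u 0*v 0 + u 1*v 1 + u 2*v 2 + u 3*v 3 + u 4*v 4 + u 5*v 5 + u 6*v 6 := by
  simp [PiLp.inner_apply, RCLike.inner_apply, conj_trivial, Fin.sum_univ_seven]; ring

lemma phi0_eq' (u v w : V7) : phi0 u v w = ⟪cross u v, w⟫ := by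
  simp [phi0, w3, Matrix.det_fin_three, inner7, Fin.sum_univ_seven,
    cross0, cross1, cross2, cross3, cross4, cross5, cross6]
  ring

lemma phi0_swap23 (u v w : V7) : phi0 u v w = - phi0 u w v := by
  simp [phi0, w3, Matrix.det_fin_three]; ring

lemma phi0_cyc (u v w : V7) : phi0 u v w = phi0 w u v := by
  simp [phi0, w3, Matrix.det_fin_three]; ring

lemma cross_anti (u v : V7) : cross u v = - cross v u := by
  refine PiLp.ext (fin7cases ?_ ?_ ?_ ?_ ?_ ?_ ?_) <;>
    (simp only [cross0, cross1, cross2, cross3, cross4, cross5, cross6, PiLp.neg_apply]; ring)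

lemma cross_self (u : V7) : cross u u = 0 := by
  refine PiLp.ext (fin7cases ?_ ?_ ?_ ?_ ?_ ?_ ?_) <;>
    (simp only [cross0, cross1, cross2, cross3, cross4, cross5, cross6, PiLp.zero_apply]; ring)

lemma cross_addr (u v w : V7) : cross u (v + w) = cross u v + cross u w := by
  refine PiLp.ext (fin7cases ?_ ?_ ?_ ?_ ?_ ?_ ?_) <;>
    (simp only [cross0, cross1, cross2, cross3, cross4, cross5, cross6, PiLp.add_apply]; ring)

lemma cross_addl (u v w : V7) : cross (u + v) w = cross u w + cross v w := by
  refine PiLp.ext (fin7cases ?_ ?_ ?_ ?_ ?_ ?_ ?_) <;>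
    (simp only [cross0, cross1, cross2, cross3, cross4, cross5, cross6, PiLp.add_apply]; ring)

lemma cross_subr (u v w : V7) : cross u (v - w) = cross u v - cross u w := by
  refine PiLp.ext (fin7cases ?_ ?_ ?_ ?_ ?_ ?_ ?_) <;>
    (simp only [cross0, cross1, cross2, cross3, cross4, cross5, cross6, PiLp.sub_apply]; ring)

lemma cross_subl (u v w : V7) : cross (u - v) w = cross u w - cross v w := by
  refine PiLp.ext (fin7cases ?_ ?_ ?_ ?_ ?_ ?_ ?_) <;>
    (simp only [cross0, cross1, cross2, cross3, cross4, cross5, cross6, PiLp.sub_apply]; ring)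

lemma cross_smulr (a : ℝ) (u v : V7) : cross u (a • v) = a • cross u v := by
  refine PiLp.ext (fin7cases ?_ ?_ ?_ ?_ ?_ ?_ ?_) <;>
    (simp only [cross0, cross1, cross2, cross3, cross4, cross5, cross6, PiLp.smul_apply,
      smul_eq_mul]; ring)

lemma cross_smull (a : ℝ) (u v : V7) : cross (a • u) v = a • cross u v := by
  refine PiLp.ext (fin7cases ?_ ?_ ?_ ?_ ?_ ?_ ?_) <;>
    (simp only [cross0, cross1, cross2, cross3, cross4, cross5, cross6, PiLp.smul_apply,
      smul_eq_mul]; ring)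

lemma cross_negr (u v : V7) : cross u (-v) = - cross u v := by
  refine PiLp.ext (fin7cases ?_ ?_ ?_ ?_ ?_ ?_ ?_) <;>
    (simp only [cross0, cross1, cross2, cross3, cross4, cross5, cross6, PiLp.neg_apply]; ring)

lemma cross_negl (u v : V7) : cross (-u) v = - cross u v := by
  refine PiLp.ext (fin7cases ?_ ?_ ?_ ?_ ?_ ?_ ?_) <;>
    (simp only [cross0, cross1, cross2, cross3, cross4, cross5, cross6, PiLp.neg_apply]; ring)

lemma cross_zeror (u : V7) : cross u 0 = 0 := by
  refine PiLp.ext (fin7cases ?_ ?_ ?_ ?_ ?_ ?_ ?_) <;>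
    (simp only [cross0, cross1, cross2, cross3, cross4, cross5, cross6, PiLp.zero_apply]; ring)

lemma triple (u v : V7) : cross u (cross u v) = ⟪u,v⟫ • u - ⟪u,u⟫ • v := by
  refine PiLp.ext (fin7cases ?_ ?_ ?_ ?_ ?_ ?_ ?_) <;>
    (simp only [cross0, cross1, cross2, cross3, cross4, cross5, cross6, PiLp.sub_apply,
      PiLp.smul_apply, inner7, smul_eq_mul]; ring)

lemma triple' (x y z : V7) : cross x (cross y z) + cross y (cross x z)
    = ⟪x,z⟫ • y + ⟪y,z⟫ • x - (2*⟪x,y⟫) • z := by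
  refine PiLp.ext (fin7cases ?_ ?_ ?_ ?_ ?_ ?_ ?_) <;>
    (simp only [cross0, cross1, cross2, cross3, cross4, cross5, cross6, PiLp.sub_apply,
      PiLp.add_apply, PiLp.smul_apply, inner7, smul_eq_mul]; ring)

lemma inner_cross_left (u v : V7) : ⟪cross u v, u⟫ = 0 := by
  simp only [inner7, cross0, cross1, cross2, cross3, cross4, cross5, cross6]; ring

lemma inner_cross_right (u v : V7) : ⟪cross u v, v⟫ = 0 := by
  simp only [inner7, cross0, cross1, cross2, cross3, cross4, cross5, cross6]; ring

lemma cic (u v w : V7) : ⟪cross u v, cross u w⟫ = ⟪u,u⟫*⟪v,w⟫ - ⟪u,v⟫*⟪u,w⟫ := by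
  simp only [inner7, cross0, cross1, cross2, cross3, cross4, cross5, cross6]; ring



lemma inner6 (x y : V6) : ⟪x, y⟫ =
    x 0*y 0 + x 1*y 1 + x 2*y 2 + x 3*y 3 + x 4*y 4 + x 5*y 5 := by
  simp [PiLp.inner_apply, RCLike.inner_apply, conj_trivial, Fin.sum_univ_six]; ring

lemma addz {A B : V7} (h : A + B = 0) : A = -B := eq_neg_of_add_eq_zero_left h

set_option maxHeartbeats 2000000 in
theorem main (b0 b1 b3 : V7) (h00 : ⟪b0,b0⟫ = 1) (h11 : ⟪b1,b1⟫ = 1) (h33 : ⟪b3,b3⟫ = 1)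
    (h01 : ⟪b0,b1⟫ = 0) (h03 : ⟪b0,b3⟫ = 0) (h13 : ⟪b1,b3⟫ = 0)
    (h23 : ⟪cross b0 b1, b3⟫ = 0) :
    ∃ F : V6 →ₗᵢ[ℝ] V7,
      Set.range F = ((Submodule.span ℝ ({b0} : Set V7))ᗮ : Submodule ℝ V7) ∧
      (∀ x y : V6, phi0 b0 (F x) (F y) = omega6 x y) ∧
      (∀ x y z : V6, phi0 (F x) (F y) (F z) = Omega6 x y z) := by
  set b2 := cross b0 b1 with hb2
  set b4 := cross b0 b3 with hb4
  set b5 := cross b1 b3 with hb5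
  set b6 := cross b0 b5 with hb6
  -- reversed given inners
  have e10 : ⟪b1,b0⟫ = 0 := by rw [real_inner_comm]; exact h01
  have e30 : ⟪b3,b0⟫ = 0 := by rw [real_inner_comm]; exact h03
  have e31 : ⟪b3,b1⟫ = 0 := by rw [real_inner_comm]; exact h13
  -- inner table
  have e02 : ⟪b0,b2⟫ = 0 := by rw [real_inner_comm, hb2]; exact inner_cross_left b0 b1
  have e20 : ⟪b2,b0⟫ = 0 := by rw [real_inner_comm]; exact e02
  have e12 : ⟪b1,b2⟫ = 0 := by rw [real_inner_comm, hb2]; exact inner_cross_right b0 b1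
  have e21 : ⟪b2,b1⟫ = 0 := by rw [real_inner_comm]; exact e12
  have e22 : ⟪b2,b2⟫ = 1 := by rw [hb2, cic, h00, h11, h01]; ring
  have e32 : ⟪b3,b2⟫ = 0 := by rw [real_inner_comm]; exact h23
  have e04 : ⟪b0,b4⟫ = 0 := by rw [real_inner_comm, hb4]; exact inner_cross_left b0 b3
  have e40 : ⟪b4,b0⟫ = 0 := by rw [real_inner_comm]; exact e04
  have e34 : ⟪b3,b4⟫ = 0 := by rw [real_inner_comm, hb4]; exact inner_cross_right b0 b3
  have e43 : ⟪b4,b3⟫ = 0 := by rw [real_inner_comm]; exact e34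
  have e44 : ⟪b4,b4⟫ = 1 := by rw [hb4, cic, h00, h33, h03]; ring
  have e14 : ⟪b1,b4⟫ = 0 := by
    rw [real_inner_comm, hb4, ← phi0_eq', phi0_swap23, phi0_eq', ← hb2, h23, neg_zero]
  have e41 : ⟪b4,b1⟫ = 0 := by rw [real_inner_comm]; exact e14
  have e24 : ⟪b2,b4⟫ = 0 := by rw [hb2, hb4, cic, h13, h01]; ring
  have e42 : ⟪b4,b2⟫ = 0 := by rw [real_inner_comm]; exact e24
  have e05 : ⟪b0,b5⟫ = 0 := by
    rw [real_inner_comm, hb5, ← phi0_eq', phi0_cyc, phi0_eq', ← hb2, h23]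
  have e50 : ⟪b5,b0⟫ = 0 := by rw [real_inner_comm]; exact e05
  have e15 : ⟪b1,b5⟫ = 0 := by rw [real_inner_comm, hb5]; exact inner_cross_left b1 b3
  have e51 : ⟪b5,b1⟫ = 0 := by rw [real_inner_comm]; exact e15
  have e35 : ⟪b3,b5⟫ = 0 := by rw [real_inner_comm, hb5]; exact inner_cross_right b1 b3
  have e53 : ⟪b5,b3⟫ = 0 := by rw [real_inner_comm]; exact e35
  have e55 : ⟪b5,b5⟫ = 1 := by rw [hb5, cic, h11, h33, h13]; ring
  have e25 : ⟪b2,b5⟫ = 0 := by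
    rw [hb2, hb5, cross_anti b0 b1, inner_neg_left, cic, h03, e10]; ring
  have e52 : ⟪b5,b2⟫ = 0 := by rw [real_inner_comm]; exact e25
  have e45 : ⟪b4,b5⟫ = 0 := by
    rw [hb4, hb5, cross_anti b0 b3, cross_anti b1 b3, inner_neg_left, inner_neg_right,
      neg_neg, cic, h01, e30]; ring
  have e54 : ⟪b5,b4⟫ = 0 := by rw [real_inner_comm]; exact e45
  have e06 : ⟪b0,b6⟫ = 0 := by rw [real_inner_comm, hb6]; exact inner_cross_left b0 b5
  have e60 : ⟪b6,b0⟫ = 0 := by rw [real_inner_comm]; exact e06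
  have e56 : ⟪b5,b6⟫ = 0 := by rw [real_inner_comm, hb6]; exact inner_cross_right b0 b5
  have e65 : ⟪b6,b5⟫ = 0 := by rw [real_inner_comm]; exact e56
  have e66 : ⟪b6,b6⟫ = 1 := by rw [hb6, cic, h00, e05, e55]; ring
  have e16 : ⟪b1,b6⟫ = 0 := by
    rw [real_inner_comm, hb6, ← phi0_eq', phi0_swap23, phi0_eq', ← hb2, e25, neg_zero]
  have e61 : ⟪b6,b1⟫ = 0 := by rw [real_inner_comm]; exact e16
  have e36 : ⟪b3,b6⟫ = 0 := by
    rw [real_inner_comm, hb6, ← phi0_eq', phi0_swap23, phi0_eq', ← hb4, e45, neg_zero]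
  have e63 : ⟪b6,b3⟫ = 0 := by rw [real_inner_comm]; exact e36
  have e26 : ⟪b2,b6⟫ = 0 := by rw [hb2, hb6, cic, e15, h01]; ring
  have e62 : ⟪b6,b2⟫ = 0 := by rw [real_inner_comm]; exact e26
  have e46 : ⟪b4,b6⟫ = 0 := by rw [hb4, hb6, cic, e35, h03]; ring
  have e64 : ⟪b6,b4⟫ = 0 := by rw [real_inner_comm]; exact e46
  -- cross product table
  have t01 : cross b0 b1 = b2 := hb2.symm
  have t03 : cross b0 b3 = b4 := hb4.symm
  have t13 : cross b1 b3 = b5 := hb5.symm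
  have t05 : cross b0 b5 = b6 := hb6.symm
  have t02 : cross b0 b2 = -b1 := by
    have h := triple b0 b1; rw [h01, h00, ← hb2] at h; simpa using h
  have t04 : cross b0 b4 = -b3 := by
    have h := triple b0 b3; rw [h03, h00, ← hb4] at h; simpa using h
  have t06 : cross b0 b6 = -b5 := by
    have h := triple b0 b5; rw [e05, h00, ← hb6] at h; simpa using h
  have t12 : cross b1 b2 = b0 := by
    have h := triple b1 b0
    rw [e10, h11, cross_anti b1 b0, cross_negr, ← hb2] at h
    simpa using h
  have t15 : cross b1 b5 = -b3 := by
    have h := triple b1 b3; rw [h13, h11, ← hb5] at h; simpa using h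
  have t14 : cross b1 b4 = -b6 := by
    have h := triple' b1 b0 b3
    rw [h13, h03, e10, ← hb4, ← hb5, ← hb6] at h
    simp only [zero_smul, smul_zero, mul_zero, add_zero, zero_add, sub_zero] at h
    exact addz h
  have t16 : cross b1 b6 = b4 := by
    have h := triple' b1 b0 b5
    rw [e15, e05, e10, ← hb6, t15, cross_negr, t03] at h
    simp only [zero_smul, smul_zero, mul_zero, add_zero, zero_add, sub_zero] at h
    have h2 := addz h; rwa [neg_neg] at h2
  have t23 : cross b2 b3 = -b6 := by
    have h := triple' b3 b0 b1
    rw [e31, h01, e30, ← hb2, cross_anti b3 b1, cross_negr, ← hb5, ← hb6] at h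
    simp only [zero_smul, smul_zero, mul_zero, add_zero, zero_add, sub_zero] at h
    have h2 := addz h
    rw [cross_anti b2 b3, h2, neg_neg]
  have t24 : cross b2 b4 = -b5 := by
    have h := triple' b2 b0 b3
    rw [h23, h03, e20, ← hb4, t23, cross_negr, t06] at h
    simp only [zero_smul, smul_zero, mul_zero, add_zero, zero_add, sub_zero, neg_neg] at h
    exact addz h
  have t25 : cross b2 b5 = b4 := by
    have h := triple' b2 b1 b3
    rw [h23, h13, e21, ← hb5, t23, cross_negr, t16] at h
    simp only [zero_smul, smul_zero, mul_zero, add_zero, zero_add, sub_zero, neg_neg] at h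
    have h2 := addz h; rwa [neg_neg] at h2
  have t26 : cross b2 b6 = b3 := by
    have h := triple' b2 b0 b5
    rw [e25, e05, e20, ← hb6, t25, t04] at h
    simp only [zero_smul, smul_zero, mul_zero, add_zero, zero_add, sub_zero] at h
    have h2 := addz h; rwa [neg_neg] at h2
  have t34 : cross b3 b4 = b0 := by
    have h := triple b3 b0
    rw [e30, h33, cross_anti b3 b0, cross_negr, ← hb4] at h
    simpa using h
  have t35 : cross b3 b5 = b1 := by
    have h := triple b3 b1
    rw [e31, h33, cross_anti b3 b1, cross_negr, ← hb5] at h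
    simpa using h
  have t36 : cross b3 b6 = -b2 := by
    have h := triple' b3 b0 b5
    rw [e35, e05, e30, ← hb6, t35, t01] at h
    simp only [zero_smul, smul_zero, mul_zero, add_zero, zero_add, sub_zero] at h
    exact addz h
  have t45 : cross b4 b5 = -b2 := by
    have h := triple' b4 b1 b3
    rw [e43, h13, e41, ← hb5, cross_anti b4 b3, cross_negr, t34, cross_anti b1 b0,
      t01] at h
    simp only [zero_smul, smul_zero, mul_zero, add_zero, zero_add, sub_zero, neg_neg] at h
    exact addz h
  have t46 : cross b4 b6 = -b1 := by
    have h := triple' b4 b0 b5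
    rw [e45, e05, e40, ← hb6, t45, cross_negr, t02] at h
    simp only [zero_smul, smul_zero, mul_zero, add_zero, zero_add, sub_zero, neg_neg] at h
    exact addz h
  have t56 : cross b5 b6 = b0 := by
    have h := triple' b5 b0 b5
    rw [e55, e05, e50, ← hb6, cross_self, cross_zeror] at h
    simpa using h
  -- reversed cross table
  have t10 : cross b1 b0 = -b2 := by rw [cross_anti b1 b0, t01]
  have t20 : cross b2 b0 = b1 := by rw [cross_anti b2 b0, t02, neg_neg]
  have t30 : cross b3 b0 = -b4 := by rw [cross_anti b3 b0, t03]
  have t40 : cross b4 b0 = b3 := by rw [cross_anti b4 b0, t04, neg_neg]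
  have t50 : cross b5 b0 = -b6 := by rw [cross_anti b5 b0, t05]
  have t60 : cross b6 b0 = b5 := by rw [cross_anti b6 b0, t06, neg_neg]
  have t21 : cross b2 b1 = -b0 := by rw [cross_anti b2 b1, t12]
  have t31 : cross b3 b1 = -b5 := by rw [cross_anti b3 b1, t13]
  have t41 : cross b4 b1 = b6 := by rw [cross_anti b4 b1, t14, neg_neg]
  have t51 : cross b5 b1 = b3 := by rw [cross_anti b5 b1, t15, neg_neg]
  have t61 : cross b6 b1 = -b4 := by rw [cross_anti b6 b1, t16]
  have t32 : cross b3 b2 = b6 := by rw [cross_anti b3 b2, t23, neg_neg]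
  have t42 : cross b4 b2 = b5 := by rw [cross_anti b4 b2, t24, neg_neg]
  have t52 : cross b5 b2 = -b4 := by rw [cross_anti b5 b2, t25]
  have t62 : cross b6 b2 = -b3 := by rw [cross_anti b6 b2, t26]
  have t43 : cross b4 b3 = -b0 := by rw [cross_anti b4 b3, t34]
  have t53 : cross b5 b3 = -b1 := by rw [cross_anti b5 b3, t35]
  have t63 : cross b6 b3 = b2 := by rw [cross_anti b6 b3, t36, neg_neg]
  have t54 : cross b5 b4 = b2 := by rw [cross_anti b5 b4, t45, neg_neg]
  have t64 : cross b6 b4 = b1 := by rw [cross_anti b6 b4, t46, neg_neg]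
  have t65 : cross b6 b5 = -b0 := by rw [cross_anti b6 b5, t56]
  -- the linear isometry
  let L : V6 →ₗ[ℝ] V7 :=
    { toFun := fun x => x 0 • b1 + x 1 • b3 + x 2 • b5 - x 3 • b6 - x 4 • b4 + x 5 • b2
      map_add' := by
        intro x y; simp only [PiLp.add_apply]; module
      map_smul' := by
        intro a x; simp only [PiLp.smul_apply, smul_eq_mul, RingHom.id_apply]; module }
  have hL : ∀ x y : V6, ⟪L x, L y⟫ = ⟪x, y⟫ := by
    intro x y
    show ⟪x 0 • b1 + x 1 • b3 + x 2 • b5 - x 3 • b6 - x 4 • b4 + x 5 • b2,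
          y 0 • b1 + y 1 • b3 + y 2 • b5 - y 3 • b6 - y 4 • b4 + y 5 • b2⟫ = ⟪x, y⟫
    rw [inner6]
    simp only [inner_add_left, inner_add_right, inner_sub_left, inner_sub_right,
      real_inner_smul_left, real_inner_smul_right,
      h11, h13, h33, e15, e51, e35, e53, e55, e16, e61, e36, e63, e56, e65, e66,
      e14, e41, e34, e43, e45, e54, e46, e64, e44, e12, e21, e32, e52, e62, e42, e22,
      e25, e26, e24, h23, h01, h03, e10, e30, e31]
    ring
  refine ⟨L.isometryOfInner hL, ?_, ?_, ?_⟩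
  · -- range
    have hFL : ⇑(L.isometryOfInner hL) = ⇑L := LinearMap.coe_isometryOfInner L hL
    have hb0 : b0 ≠ 0 := by
      intro h; rw [h, inner_zero_left] at h00; norm_num at h00
    have hrange : LinearMap.range L = (Submodule.span ℝ ({b0} : Set V7))ᗮ := by
      apply Submodule.eq_of_le_of_finrank_eq
      · rintro _ ⟨x, rfl⟩
        rw [Submodule.mem_orthogonal_singleton_iff_inner_right]
        show ⟪b0, x 0 • b1 + x 1 • b3 + x 2 • b5 - x 3 • b6 - x 4 • b4 + x 5 • b2⟫ = 0
        simp only [inner_add_right, inner_sub_right, real_inner_smul_right,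
          h01, h03, e05, e06, e04, e02]
        ring
      · have hinj : Function.Injective L := by
          rw [← hFL]; exact (L.isometryOfInner hL).injective
        have h1 : Module.finrank ℝ (LinearMap.range L) = 6 := by
          rw [LinearMap.finrank_range_of_inj hinj, finrank_euclideanSpace_fin]
        have h2 : Module.finrank ℝ ((Submodule.span ℝ ({b0} : Set V7))ᗮ) = 6 := by
          have h3 := Submodule.finrank_add_finrank_orthogonal
            (K := Submodule.span ℝ ({b0} : Set V7))
          rw [finrank_span_singleton hb0, finrank_euclideanSpace_fin] at h3
          omega
        rw [h1, h2]
    rw [hFL, ← hrange]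
    exact (LinearMap.coe_range L).symm
  · -- omega part
    intro x y
    have hFx : ∀ x : V6, (L.isometryOfInner hL) x
        = x 0 • b1 + x 1 • b3 + x 2 • b5 - x 3 • b6 - x 4 • b4 + x 5 • b2 := fun _ => rfl
    rw [hFx, hFx, phi0_eq']
    simp only [cross_addr, cross_subr, cross_smulr, cross_negr,
      t01, t03, t13, t05, t02, t04, t06, t12, t15, t14, t16]
    simp only [inner_add_left, inner_add_right, inner_sub_left, inner_sub_right,
      inner_neg_left, inner_neg_right, real_inner_smul_left, real_inner_smul_right,
      smul_neg, neg_neg,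
      h00, h01, h03, h11, h13, h33, e10, e30, e31,
      e02, e20, e12, e21, e22, h23, e32, e04, e40, e34, e43, e44, e14, e41, e24, e42,
      e05, e50, e15, e51, e35, e53, e55, e25, e52, e45, e54,
      e06, e60, e56, e65, e66, e16, e61, e36, e63, e26, e62, e46, e64]
    simp only [omega6, f2]
    ring
  · -- Omega part
    intro x y z
    have hFx : ∀ x : V6, (L.isometryOfInner hL) x
        = x 0 • b1 + x 1 • b3 + x 2 • b5 - x 3 • b6 - x 4 • b4 + x 5 • b2 := fun _ => rfl
    rw [hFx, hFx, hFx, phi0_eq']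
    simp only [cross_addr, cross_subr, cross_smulr, cross_negr,
      cross_addl, cross_subl, cross_smull, cross_negl, cross_self, cross_zeror,
      smul_neg, neg_neg, smul_zero,
      t12, t13, t14, t15, t16, t21, t23, t24, t25, t26,
      t31, t32, t34, t35, t36, t41, t42, t43, t45, t46,
      t51, t52, t53, t54, t56, t61, t62, t63, t64, t65]
    simp only [inner_add_left, inner_add_right, inner_sub_left, inner_sub_right,
      inner_neg_left, inner_neg_right, real_inner_smul_left, real_inner_smul_right,
      inner_zero_left, inner_zero_right, smul_neg, neg_neg,
      h00, h01, h03, h11, h13, h33, e10, e30, e31,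
      e02, e20, e12, e21, e22, h23, e32, e04, e40, e34, e43, e44, e14, e41, e24, e42,
      e05, e50, e15, e51, e35, e53, e55, e25, e52, e45, e54,
      e06, e60, e56, e65, e66, e16, e61, e36, e63, e26, e62, e46, e64]
    simp [Omega6, f3, Matrix.det_fin_three]
    ring


end G2Aux

open G2Aux

/-- Pointwise content of Theorem 5: every unit vector ξ ∈ ℝ⁷ induces on the hyperplane ξ⊥
the standard SU(3)-structure; there is a linear isometry F : ℝ⁶ → ℝ⁷ with image ξ⊥ pulling
ω_ξ = ι_ξφ₀ back to f¹⁶−f²⁵−f³⁴ and Re Ω_ξ = φ₀|_{ξ⊥} back to f¹²³+f¹⁴⁵+f²⁴⁶−f³⁵⁶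
(transitivity of G₂ on S⁶ with stabilizer SU(3)). -/
theorem exists_su3_structure_on_hyperplane (ξ : V7) (hξ : ‖ξ‖ = 1) :
    ∃ F : V6 →ₗᵢ[ℝ] V7,
      Set.range F = ((Submodule.span ℝ ({ξ} : Set V7))ᗮ : Submodule ℝ V7) ∧
      (∀ x y : V6, phi0 ξ (F x) (F y) = omega6 x y) ∧
      (∀ x y z : V6, phi0 (F x) (F y) (F z) = Omega6 x y z) := by
  classical
  have h00 : ⟪ξ, ξ⟫ = 1 := by
    rw [real_inner_self_eq_norm_mul_norm, hξ]; norm_num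
  -- find a vector outside span {ξ}
  have h1lt : Submodule.span ℝ ({ξ} : Set V7) < ⊤ := by
    apply span_lt_top_of_card_lt_finrank
    simp [finrank_euclideanSpace_fin]
  obtain ⟨v, -, hv⟩ := SetLike.exists_of_lt h1lt
  set w : V7 := v - ⟪ξ, v⟫ • ξ with hw
  have hw0 : w ≠ 0 := by
    intro h; apply hv
    have h2 : v = ⟪ξ, v⟫ • ξ := by rw [hw] at h; rwa [sub_eq_zero] at h
    rw [h2]
    exact Submodule.smul_mem _ _ (Submodule.mem_span_singleton_self ξ)
  have hnw : ‖w‖ ≠ 0 := norm_ne_zero_iff.mpr hw0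
  have hxw : ⟪ξ, w⟫ = 0 := by
    rw [hw, inner_sub_right, real_inner_smul_right, h00, mul_one, sub_self]
  set b1 : V7 := ‖w‖⁻¹ • w with hb1
  have h11 : ⟪b1, b1⟫ = 1 := by
    rw [hb1, real_inner_smul_left, real_inner_smul_right, real_inner_self_eq_norm_mul_norm]
    field_simp
  have h01 : ⟪ξ, b1⟫ = 0 := by rw [hb1, real_inner_smul_right, hxw, mul_zero]
  have e02 : ⟪ξ, cross ξ b1⟫ = 0 := by rw [real_inner_comm]; exact inner_cross_left ξ b1
  have e12 : ⟪b1, cross ξ b1⟫ = 0 := by rw [real_inner_comm]; exact inner_cross_right ξ b1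
  have e22 : ⟪cross ξ b1, cross ξ b1⟫ = 1 := by rw [cic, h00, h11, h01]; ring
  -- find a vector outside span {ξ, b1, cross ξ b1}
  have h3lt : Submodule.span ℝ ({ξ, b1, cross ξ b1} : Set V7) < ⊤ := by
    apply span_lt_top_of_card_lt_finrank
    rw [finrank_euclideanSpace_fin, Set.toFinset_insert, Set.toFinset_insert,
      Set.toFinset_singleton]
    have hA := Finset.card_insert_le ξ (insert b1 ({cross ξ b1} : Finset V7))
    have hB := Finset.card_insert_le b1 ({cross ξ b1} : Finset V7)
    simp only [Finset.card_singleton] at hA hB ⊢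
    omega
  obtain ⟨u, -, hu⟩ := SetLike.exists_of_lt h3lt
  set q : V7 := u - ⟪ξ, u⟫ • ξ - ⟪b1, u⟫ • b1 - ⟪cross ξ b1, u⟫ • cross ξ b1 with hq
  have hq0 : q ≠ 0 := by
    intro h; apply hu
    have h3 : u - ⟪ξ, u⟫ • ξ - ⟪b1, u⟫ • b1 - ⟪cross ξ b1, u⟫ • cross ξ b1 = 0 := by
      rw [← hq]; exact h
    have h2 : u = ⟪ξ, u⟫ • ξ + ⟪b1, u⟫ • b1 + ⟪cross ξ b1, u⟫ • cross ξ b1 := by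
      linear_combination (norm := module) h3
    rw [h2]
    refine Submodule.add_mem _ (Submodule.add_mem _ ?_ ?_) ?_ <;>
      refine Submodule.smul_mem _ _ (Submodule.subset_span ?_) <;> simp
  have hnq : ‖q‖ ≠ 0 := norm_ne_zero_iff.mpr hq0
  have hxq : ⟪ξ, q⟫ = 0 := by
    rw [hq]
    simp only [inner_sub_right, real_inner_smul_right, h00, h01, e02]
    ring
  have h10 : ⟪b1, ξ⟫ = 0 := by rw [real_inner_comm]; exact h01
  have h1q : ⟪b1, q⟫ = 0 := by
    rw [hq]
    simp only [inner_sub_right, real_inner_smul_right, h10, h11, e12]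
    ring
  have h2q : ⟪cross ξ b1, q⟫ = 0 := by
    rw [hq]
    simp only [inner_sub_right, real_inner_smul_right, inner_cross_left,
      inner_cross_right, e22]
    ring
  set b3 : V7 := ‖q‖⁻¹ • q with hb3
  have h33 : ⟪b3, b3⟫ = 1 := by
    rw [hb3, real_inner_smul_left, real_inner_smul_right, real_inner_self_eq_norm_mul_norm]
    field_simp
  have h03 : ⟪ξ, b3⟫ = 0 := by rw [hb3, real_inner_smul_right, hxq, mul_zero]
  have h13 : ⟪b1, b3⟫ = 0 := by rw [hb3, real_inner_smul_right, h1q, mul_zero]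
  have h23 : ⟪cross ξ b1, b3⟫ = 0 := by rw [hb3, real_inner_smul_right, h2q, mul_zero]
  exact main ξ b1 b3 h00 h11 h33 h01 h03 h13 h23
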